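/- Let X be a compact topological space, A : X → Mat₂(ℝ) continuous with det A(x) > 0 for all x ∈ X, E : X → Mat₂(ℝ) continuous, and suppose there is r > 0 such that for every x ∈ X either E(x)² = 0 or 4·det E(x) − (tr E(x))² ≥ r. Then there exist constants c > 0 and R > 0 such that for every x ∈ X and every t ∈ ℂ with |Im t| ≤ R, one has |det( A(x)_ℂ · (I + t · E(x)_ℂ) )| ≥ c, where M_ℂ denotes the 2×2 complex matrix obtained from a real matrix M by viewing its entries in ℂ. -/

import Mathlib

open Matrix

noncomputable section

private lemma det_map_ofReal' (M : Matrix (Fin 2) (Fin 2) ℝ) :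
    ((M.map Complex.ofReal).det) = (M.det : ℂ) := by
  simp [Matrix.det_fin_two, Matrix.map_apply]

private lemma det_one_add_smul' (t : ℂ) (M : Matrix (Fin 2) (Fin 2) ℝ) :
    (1 + t • M.map (Complex.ofReal)).det
      = 1 + t * (M.trace : ℂ) + t^2 * (M.det : ℂ) := by
  simp [Matrix.det_fin_two, Matrix.trace_fin_two, Matrix.add_apply, Matrix.smul_apply,
    Matrix.one_apply, Matrix.map_apply]
  ring

private lemma nilp_fin_two' (M : Matrix (Fin 2) (Fin 2) ℝ) (h : M * M = 0) :
    M.trace = 0 ∧ M.det = 0 := by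
  have hdet : M.det = 0 := by
    have := congrArg Matrix.det h
    rw [Matrix.det_mul, Matrix.det_zero] at this
    nlinarith [this]
  refine ⟨?_, hdet⟩
  have h00 := congrFun (congrFun h 0) 0
  have h11 := congrFun (congrFun h 1) 1
  simp [Matrix.mul_apply, Fin.sum_univ_two] at h00 h11
  rw [Matrix.det_fin_two] at hdet
  rw [Matrix.trace_fin_two]
  nlinarith [h00, h11, hdet]

private lemma key_ineq' (T D : ℝ) (hD : 0 < D) (hpos : 0 < 4*D - T^2) (t : ℂ)
    (hq : t.im ^ 2 ≤ (4*D - T^2) / (8*D^2)) :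
    (4*D - T^2) / (8*D) ≤ ‖1 + t * T + t^2 * D‖ := by
  set d : ℝ := (4*D - T^2) / (4*D^2) with hd
  set c : ℝ := T / (2*D) with hc
  have hD' : (D:ℂ) ≠ 0 := by exact_mod_cast hD.ne'
  have hfact : 1 + t * T + t^2 * D = (D:ℂ) * ((t + (c:ℂ))^2 + (d:ℂ)) := by
    rw [hd, hc]
    push_cast
    field_simp
    ring
  have hdpos : 0 < d := by
    apply div_pos hpos; positivity
  have hre : ((t + (c:ℂ))^2 + (d:ℂ)).re = (t.re + c)^2 - t.im^2 + d := by
    simp [pow_two, Complex.add_re, Complex.mul_re]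
  have habs : d/2 ≤ ‖(t + (c:ℂ))^2 + (d:ℂ)‖ := by
    have h1 := Complex.re_le_norm ((t + (c:ℂ))^2 + (d:ℂ))
    rw [hre] at h1
    have hq' : t.im^2 ≤ d/2 := by
      rw [hd]; calc t.im^2 ≤ (4*D - T^2) / (8*D^2) := hq
        _ = (4*D - T^2) / (4*D^2) / 2 := by ring
    nlinarith [sq_nonneg (t.re + c)]
  calc (4*D - T^2) / (8*D) = D * (d/2) := by rw [hd]; field_simp; ring
    _ ≤ D * ‖(t + (c:ℂ))^2 + (d:ℂ)‖ :=
        mul_le_mul_of_nonneg_left habs hD.le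
    _ = ‖1 + t * T + t^2 * D‖ := by
        rw [hfact, norm_mul, Complex.norm_real, Real.norm_of_nonneg hD.le]

/-- Invertibility criterion: if `A, E : X → Mat₂(ℝ)` are continuous on a
compact space `X`, `det A(x) > 0`, and for each `x` either `E(x)² = 0` or
`4 det E(x) − (tr E(x))² ≥ r > 0`, then there are `c > 0` and `R > 0` such that
`|det(A(x)·(I + tE(x)))| ≥ c` for every `x` and every complex `t` with `|Im t| ≤ R`. -/
theorem stmt_7 (X : Type*) [TopologicalSpace X] [CompactSpace X]
    (A E : X → Matrix (Fin 2) (Fin 2) ℝ)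
    (hA : ∀ i j, Continuous fun x => A x i j)
    (hE : ∀ i j, Continuous fun x => E x i j)
    (hdet : ∀ x, 0 < (A x).det)
    (r : ℝ) (hr : 0 < r)
    (hcond : ∀ x, E x * E x = 0 ∨ r ≤ 4 * (E x).det - (E x).trace ^ 2) :
    ∃ c > (0 : ℝ), ∃ R > (0 : ℝ), ∀ x, ∀ t : ℂ, |t.im| ≤ R →
      c ≤ ‖
        (((A x).map (Complex.ofReal)) * (1 + t • (E x).map (Complex.ofReal))).det‖ := by
  rcases isEmpty_or_nonempty X with hX | hX
  · exact ⟨1, one_pos, 1, one_pos, fun x => (IsEmpty.false x).elim⟩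
  -- continuity of determinants
  have hcontA : Continuous fun x => (A x).det := by
    have : (fun x => (A x).det)
        = fun x => A x 0 0 * A x 1 1 - A x 0 1 * A x 1 0 := by
      funext x; exact Matrix.det_fin_two _
    rw [this]
    exact ((hA 0 0).mul (hA 1 1)).sub ((hA 0 1).mul (hA 1 0))
  have hcontE : Continuous fun x => (E x).det := by
    have : (fun x => (E x).det)
        = fun x => E x 0 0 * E x 1 1 - E x 0 1 * E x 1 0 := by
      funext x; exact Matrix.det_fin_two _
    rw [this]
    exact ((hE 0 0).mul (hE 1 1)).sub ((hE 0 1).mul (hE 1 0))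
  obtain ⟨x₁, -, hx₁⟩ := isCompact_univ.exists_isMinOn Set.univ_nonempty
    hcontA.continuousOn
  obtain ⟨x₂, -, hx₂⟩ := isCompact_univ.exists_isMaxOn Set.univ_nonempty
    hcontE.continuousOn
  set a : ℝ := (A x₁).det with ha
  have hapos : 0 < a := hdet x₁
  have haA : ∀ x, a ≤ (A x).det := fun x => hx₁ (Set.mem_univ x)
  set M : ℝ := max 1 ((E x₂).det) with hM
  have hM1 : (1:ℝ) ≤ M := le_max_left _ _
  have hMpos : 0 < M := lt_of_lt_of_le one_pos hM1
  have hME : ∀ x, (E x).det ≤ M := fun x =>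
    le_trans (hx₂ (Set.mem_univ x)) (le_max_right _ _)
  refine ⟨a * min 1 (r/(8*M)), by positivity, Real.sqrt (r/(8*M^2)), by positivity, ?_⟩
  intro x t ht
  have htim : t.im ^ 2 ≤ r/(8*M^2) := by
    have h1 : t.im ^ 2 = |t.im| ^ 2 := (sq_abs _).symm
    rw [h1]
    calc |t.im| ^ 2 ≤ Real.sqrt (r/(8*M^2)) ^ 2 :=
          pow_le_pow_left₀ (abs_nonneg _) ht 2
      _ = r/(8*M^2) := Real.sq_sqrt (by positivity)
  -- rewrite the determinant
  rw [Matrix.det_mul, det_map_ofReal', det_one_add_smul', norm_mul,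
    Complex.norm_real, Real.norm_of_nonneg (hdet x).le]
  have hkey : min 1 (r/(8*M))
      ≤ ‖1 + t * ((E x).trace : ℂ) + t^2 * ((E x).det : ℂ)‖ := by
    rcases hcond x with hnil | hΔ
    · obtain ⟨htr, hdt⟩ := nilp_fin_two' (E x) hnil
      rw [htr, hdt]
      simp
    · set T : ℝ := (E x).trace
      set D : ℝ := (E x).det
      have hpos : 0 < 4*D - T^2 := lt_of_lt_of_le hr (by linarith [hΔ])
      have hD : 0 < D := by nlinarith [sq_nonneg T]
      have hDM : D ≤ M := hME x
      have hq : t.im ^ 2 ≤ (4*D - T^2) / (8*D^2) := by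
        refine le_trans htim ?_
        rw [div_le_div_iff₀ (by positivity) (by positivity)]
        nlinarith [mul_le_mul_of_nonneg_left
          (mul_le_mul hDM hDM hD.le hMpos.le) hpos.le, hΔ]
      have h2 := key_ineq' T D hD hpos t hq
      refine le_trans (le_trans (min_le_right _ _) ?_) h2
      rw [div_le_div_iff₀ (by positivity) (by positivity)]
      nlinarith [mul_le_mul_of_nonneg_left hDM hpos.le, hΔ]
  calc a * min 1 (r/(8*M))
      ≤ (A x).det * ‖1 + t * ((E x).trace : ℂ) + t^2 * ((E x).det : ℂ)‖ :=
        mul_le_mul (haA x) hkey (by positivity) (hdet x).le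
    _ = _ := rfl
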